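/- Let G be a finite group with subgroups A, B, M satisfying conditions (1)–(4) of the soft plane construction. Then A ∩ M = A ∩ B = B ∩ M. -/
import Mathlib

open scoped Pointwise

lemma card_mul_inf {G : Type*} [Group G] [Finite G] (H K : Subgroup G) :
    Nat.card ((H : Set G) * (K : Set G) : Set G) * Nat.card (H ⊓ K : Subgroup G)
      = Nat.card H * Nat.card K := by
  classical
  set S := ((H : Set G) * (K : Set G) : Set G) with hS
  have key : ∀ g : S,
      ∃ p : H × K, (p.1 : G) * (p.2 : G) = (g : G) := by
    rintro ⟨g, hg⟩
    obtain ⟨h, hh, k, hk, rfl⟩ := hg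
    exact ⟨(⟨h, hh⟩, ⟨k, hk⟩), rfl⟩
  choose f hf using key
  let Φ : S × (H ⊓ K : Subgroup G) → H × K := fun x =>
    (⟨((f x.1).1 : G) * (x.2 : G),
        mul_mem (f x.1).1.2 (Subgroup.mem_inf.mp x.2.2).1⟩,
     ⟨((x.2 : G))⁻¹ * ((f x.1).2 : G),
        mul_mem (inv_mem (Subgroup.mem_inf.mp x.2.2).2) (f x.1).2.2⟩)
  have hbij : Function.Bijective Φ := by
    constructor
    · rintro ⟨g, d⟩ ⟨g', d'⟩ hΦ
      have e1 : ((f g).1 : G) * (d : G) = ((f g').1 : G) * (d' : G) :=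
        congrArg (fun p => (p.1 : G)) hΦ
      have e2 : ((d : G))⁻¹ * ((f g).2 : G) = ((d' : G))⁻¹ * ((f g').2 : G) :=
        congrArg (fun p => (p.2 : G)) hΦ
      have egg : (g : G) = (g' : G) := by
        rw [← hf g, ← hf g']
        calc ((f g).1 : G) * ((f g).2 : G)
            = (((f g).1 : G) * (d : G)) * (((d : G))⁻¹ * ((f g).2 : G)) := by
              rw [mul_assoc, mul_inv_cancel_left]
          _ = (((f g').1 : G) * (d' : G)) * (((d' : G))⁻¹ * ((f g').2 : G)) := by
              rw [e1, e2]
          _ = ((f g').1 : G) * ((f g').2 : G) := by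
              rw [mul_assoc, mul_inv_cancel_left]
      have hgg : g = g' := Subtype.ext egg
      subst hgg
      have : (d : G) = (d' : G) := by
        have := mul_left_cancel e1
        exact this
      exact Prod.ext rfl (Subtype.ext this)
    · rintro ⟨h, k⟩
      refine ⟨(⟨(h : G) * (k : G), Set.mul_mem_mul h.2 k.2⟩, ⟨((f ⟨(h : G) * (k : G),
        Set.mul_mem_mul h.2 k.2⟩).1 : G)⁻¹ * (h : G), ?_⟩), ?_⟩
      · set g : S := ⟨(h : G) * (k : G), Set.mul_mem_mul h.2 k.2⟩ with hg
        have h1 : ((f g).1 : G) * ((f g).2 : G) = (h : G) * (k : G) := hf g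
        have h2 : ((f g).1 : G)⁻¹ * (h : G) = ((f g).2 : G) * ((k : G))⁻¹ := by
          rw [inv_mul_eq_iff_eq_mul, ← mul_assoc, h1, mul_inv_cancel_right]
        rw [Subgroup.mem_inf]
        exact ⟨mul_mem (inv_mem (f g).1.2) h.2, h2 ▸ mul_mem (f g).2.2 (inv_mem k.2)⟩
      · set g : S := ⟨(h : G) * (k : G), Set.mul_mem_mul h.2 k.2⟩ with hg
        have h1 : ((f g).1 : G) * ((f g).2 : G) = (h : G) * (k : G) := hf g
        refine Prod.ext (Subtype.ext ?_) (Subtype.ext ?_)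
        · show ((f g).1 : G) * (((f g).1 : G)⁻¹ * (h : G)) = (h : G)
          rw [mul_inv_cancel_left]
        · show (((f g).1 : G)⁻¹ * (h : G))⁻¹ * ((f g).2 : G) = (k : G)
          rw [mul_inv_rev, inv_inv, mul_assoc, h1, ← mul_assoc, inv_mul_cancel, one_mul]
  calc Nat.card S * Nat.card (H ⊓ K : Subgroup G)
      = Nat.card (S × (H ⊓ K : Subgroup G)) := (Nat.card_prod _ _).symm
    _ = Nat.card (H × K) := Nat.card_eq_of_bijective Φ hbij
    _ = Nat.card H * Nat.card K := Nat.card_prod _ _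

lemma subgroup_eq_of_le_of_card_eq {G : Type*} [Group G] [Finite G]
    {H K : Subgroup G} (hle : H ≤ K) (hcard : Nat.card H = Nat.card K) : H = K := by
  refine SetLike.coe_injective (Set.eq_of_subset_of_ncard_le hle ?_ (Set.toFinite _))
  rw [← Nat.card_coe_set_eq, ← Nat.card_coe_set_eq]
  simpa using hcard.symm.le

/-- Under conditions (1)–(4), `A ∩ M = A ∩ B = B ∩ M`. -/
theorem stmt5 {G : Type*} [Group G] [Finite G]
    (A B M AM BM : Subgroup G) (n k : ℕ) (hn : 1 < n)
    (hk : k = Nat.card (A ⊓ B : Subgroup G))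
    (hA : Nat.card A = n * k) (hB : Nat.card B = n * k) (hM : Nat.card M = n * k)
    (hG : Nat.card G = n ^ 3 * k)
    (hAM : (AM : Set G) = (A : Set G) * (M : Set G))
    (hBM : (BM : Set G) = (B : Set G) * (M : Set G))
    (hAMcard : Nat.card AM = n ^ 2 * k) (hBMcard : Nat.card BM = n ^ 2 * k)
    (h3 : ∀ g : G, ∃ a ∈ A, ∃ m ∈ M, ∃ b ∈ B, g = a * m * b)
    (h4 : ((A : Set G) * (B : Set G)) ∩ ((B : Set G) * (A : Set G)) =
      (A : Set G) ∪ (B : Set G)) :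
    A ⊓ M = A ⊓ B ∧ A ⊓ B = B ⊓ M := by
  have hk0 : 0 < k := hk ▸ Nat.card_pos
  have hn0 : 0 < n := Nat.lt_of_lt_of_le Nat.zero_lt_one hn.le
  -- basic subgroup inclusions
  have hM_le_AM : M ≤ AM := by
    intro x hx
    have : (x : G) ∈ (AM : Set G) := by
      rw [hAM]
      simpa using Set.mul_mem_mul (A.one_mem) hx
    exact this
  have hM_le_BM : M ≤ BM := by
    intro x hx
    have : (x : G) ∈ (BM : Set G) := by
      rw [hBM]
      simpa using Set.mul_mem_mul (B.one_mem) hx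
    exact this
  have hB_le_BM : B ≤ BM := by
    intro x hx
    have : (x : G) ∈ (BM : Set G) := by
      rw [hBM]
      simpa using Set.mul_mem_mul hx (M.one_mem)
    exact this
  have hA_le_AM : A ≤ AM := by
    intro x hx
    have : (x : G) ∈ (AM : Set G) := by
      rw [hAM]
      simpa using Set.mul_mem_mul hx (M.one_mem)
    exact this
  -- cardinalities of the product sets A*M and B*M
  have hAMc : Nat.card ((A : Set G) * (M : Set G) : Set G) = n ^ 2 * k := by
    rw [← hAM]; simpa using hAMcard
  have hBMc : Nat.card ((B : Set G) * (M : Set G) : Set G) = n ^ 2 * k := by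
    rw [← hBM]; simpa using hBMcard
  -- |A ⊓ M| = k and |B ⊓ M| = k
  have hAMinf : Nat.card (A ⊓ M : Subgroup G) = k := by
    have h := card_mul_inf A M
    rw [hAMc, hA, hM] at h
    have h' : n ^ 2 * k * Nat.card (A ⊓ M : Subgroup G) = n ^ 2 * k * k := by
      rw [h]; ring
    exact Nat.eq_of_mul_eq_mul_left (by positivity) h'
  have hBMinf : Nat.card (B ⊓ M : Subgroup G) = k := by
    have h := card_mul_inf B M
    rw [hBMc, hB, hM] at h
    have h' : n ^ 2 * k * Nat.card (B ⊓ M : Subgroup G) = n ^ 2 * k * k := by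
      rw [h]; ring
    exact Nat.eq_of_mul_eq_mul_left (by positivity) h'
  -- AM * B = G and BM * A = G
  have hAMB : ((AM : Set G) * (B : Set G) : Set G) = Set.univ := by
    ext g
    simp only [Set.mem_univ, iff_true]
    obtain ⟨a, ha, m, hm, b, hb, hg⟩ := h3 g
    exact ⟨a * m, by rw [hAM]; exact Set.mul_mem_mul ha hm, b, hb, hg.symm⟩
  have hBMA : ((BM : Set G) * (A : Set G) : Set G) = Set.univ := by
    ext g
    simp only [Set.mem_univ, iff_true]
    obtain ⟨a, ha, m, hm, b, hb, hg⟩ := h3 g⁻¹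
    refine ⟨b⁻¹ * m⁻¹, by rw [hBM]; exact Set.mul_mem_mul (B.inv_mem hb) (M.inv_mem hm),
      a⁻¹, A.inv_mem ha, ?_⟩
    have : g = (a * m * b)⁻¹ := by rw [← hg, inv_inv]
    rw [this]
    group
  have huniv : Nat.card (Set.univ : Set G) = n ^ 3 * k := by
    rw [Nat.card_coe_set_eq, Set.ncard_univ, hG]
  -- |AM ⊓ B| = k and |BM ⊓ A| = k
  have hAMBinf : Nat.card (AM ⊓ B : Subgroup G) = k := by
    have h := card_mul_inf AM B
    rw [hAMB, huniv, hAMcard, hB] at h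
    have h' : n ^ 3 * k * Nat.card (AM ⊓ B : Subgroup G) = n ^ 3 * k * k := by
      rw [h]; ring
    exact Nat.eq_of_mul_eq_mul_left (by positivity) h'
  have hBMAinf : Nat.card (BM ⊓ A : Subgroup G) = k := by
    have h := card_mul_inf BM A
    rw [hBMA, huniv, hBMcard, hA] at h
    have h' : n ^ 3 * k * Nat.card (BM ⊓ A : Subgroup G) = n ^ 3 * k * k := by
      rw [h]; ring
    exact Nat.eq_of_mul_eq_mul_left (by positivity) h'
  -- A ⊓ B = BM ⊓ A and A ⊓ B = AM ⊓ B
  have hABBMA : A ⊓ B = BM ⊓ A :=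
    subgroup_eq_of_le_of_card_eq
      (le_inf (inf_le_right.trans hB_le_BM) inf_le_left)
      (by rw [← hk, hBMAinf])
  have hABAMB : A ⊓ B = AM ⊓ B :=
    subgroup_eq_of_le_of_card_eq
      (le_inf (inf_le_left.trans hA_le_AM) inf_le_right)
      (by rw [← hk, hAMBinf])
  constructor
  · refine subgroup_eq_of_le_of_card_eq ?_ (by rw [hAMinf, ← hk])
    rw [hABBMA]
    exact le_inf (inf_le_right.trans hM_le_BM) inf_le_left
  · refine (subgroup_eq_of_le_of_card_eq ?_ (by rw [hBMinf, ← hk])).symm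
    rw [hABAMB]
    exact le_inf (inf_le_right.trans hM_le_AM) inf_le_left
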